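/- Let B → K and C → K be ring homomorphisms with C → K surjective and A = B ×_K C. Let M_B be a flat B-module, M_C a flat C-module, and fix an isomorphism of K-modules θ : M_B ⊗_B K ≅ M_C ⊗_C K. Define M = M_B ×_{M_C ⊗_C K} M_C (fiber product of A-modules along the maps M_B → M_B ⊗_B K ≅ M_C ⊗_C K ← M_C). Then M is a flat A-module. -/

import Mathlib

open TensorProduct


open TensorProduct LinearMap

section Helpers

variable {R : Type*} [CommRing R]

/-- Every element of a tensor product is a finite sum of pure tensors, `Fin`-indexed. -/
lemma exists_fin_rep {X N : Type*} [AddCommGroup X] [Module R X] [AddCommGroup N] [Module R N]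
    (ω : X ⊗[R] N) : ∃ (n : ℕ) (x : Fin n → X) (y : Fin n → N), ω = ∑ i, x i ⊗ₜ[R] y i := by
  classical
  obtain ⟨S, hS⟩ := TensorProduct.exists_finset ω
  refine ⟨S.card, fun i => ((S.equivFin.symm i : S) : X × N).1,
    fun i => ((S.equivFin.symm i : S) : X × N).2, ?_⟩
  rw [hS, ← Finset.sum_attach S (fun p => p.1 ⊗ₜ[R] p.2)]
  exact (Equiv.sum_comp S.equivFin.symm (fun p : S => (p : X × N).1 ⊗ₜ[R] (p : X × N).2)).symm

/-- The key "vanishing lemma": if `∑ xᵢ ⊗ yᵢ = 0` in `X ⊗ N` with `N` flat, the relation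
can be trivialized. -/
lemma flat_vanishing {X N : Type*} [AddCommGroup X] [Module R X] [AddCommGroup N] [Module R N]
    [Module.Flat R N] {ι : Type*} [Fintype ι] (x : ι → X) (y : ι → N)
    (h : ∑ i, x i ⊗ₜ[R] y i = (0 : X ⊗[R] N)) :
    ∃ (n : ℕ) (c : ι → Fin n → R) (z : Fin n → N),
      (∀ i, y i = ∑ t, c i t • z t) ∧ ∀ t, ∑ i, c i t • x i = 0 := by
  classical
  set π : (ι → R) →ₗ[R] X := Fintype.linearCombination R x with hπ
  have hπs : ∀ i, π (Pi.single i 1) = x i := by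
    intro i; rw [hπ, Fintype.linearCombination_apply_single, one_smul]
  set X₀ : Submodule R X := LinearMap.range π with hX₀
  have hsurj0 : Function.Surjective π.rangeRestrict := LinearMap.surjective_rangeRestrict π
  have hexact0 : Function.Exact (LinearMap.ker π.rangeRestrict).subtype π.rangeRestrict :=
    LinearMap.exact_subtype_ker_map π.rangeRestrict
  have hexact : Function.Exact
      (rTensor N (LinearMap.ker π.rangeRestrict).subtype) (rTensor N π.rangeRestrict) :=
    rTensor_exact N hexact0 hsurj0
  set ζ : (ι → R) ⊗[R] N := ∑ i, Pi.single i (1 : R) ⊗ₜ[R] y i with hζ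
  have hζ0 : rTensor N π.rangeRestrict ζ = 0 := by
    have hinj : Function.Injective (rTensor N X₀.subtype) :=
      Module.Flat.rTensor_preserves_injective_linearMap X₀.subtype X₀.injective_subtype
    apply hinj
    rw [map_zero, ← LinearMap.rTensor_comp_apply]
    have : X₀.subtype ∘ₗ π.rangeRestrict = π := by
      ext v; simp
    rw [this, hζ, map_sum]
    simpa only [rTensor_tmul, hπs] using h
  obtain ⟨ω, hω⟩ := (hexact ζ).mp hζ0
  obtain ⟨n, q, z, hrep⟩ := exists_fin_rep ω
  refine ⟨n, fun i s => ((q s : ι → R)) i, z, ?_, ?_⟩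
  · intro i
    -- apply the i-th evaluation map
    set ev : (ι → R) ⊗[R] N →ₗ[R] N :=
      (TensorProduct.lid R N).toLinearMap ∘ₗ rTensor N (LinearMap.proj i) with hev
    have hev_tmul : ∀ (v : ι → R) (w : N), ev (v ⊗ₜ[R] w) = v i • w := by
      intro v w; simp [hev]
    have h1 : ev ζ = y i := by
      rw [hζ, map_sum]
      simp only [hev_tmul]
      rw [Finset.sum_eq_single i]
      · simp
      · intro j _ hj; rw [Pi.single_eq_of_ne' hj, zero_smul]
      · intro hi; exact absurd (Finset.mem_univ i) hi
    have h2 : ev ζ = ∑ s, ((q s : ι → R)) i • z s := by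
      rw [← hω, hrep, map_sum, map_sum]
      apply Finset.sum_congr rfl
      intro s _
      rw [LinearMap.rTensor_tmul, hev_tmul]
      rfl
    rw [← h1, h2]
  · intro s
    have hqker : π.rangeRestrict (q s : ι → R) = 0 := (q s).2
    have hq : π (q s : ι → R) = 0 := by
      have : π (q s : ι → R) = ((π.rangeRestrict (q s : ι → R) : X₀) : X) := rfl
      rw [this, hqker]; rfl
    have hπap : π (q s : ι → R) = ∑ i, (q s : ι → R) i • x i :=
      Fintype.linearCombination_apply R x _
    rw [hπap] at hq
    exact hq

end Helpers


section Helpers2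

variable {R : Type*} [CommRing R]

/-- Flat intersection lemma: if `ΘU ∈ U ⊗ M` and `ΘV ∈ V ⊗ M` have the same image in `W ⊗ M`
with `M` flat, then the common image comes from `(U ⊓ V) ⊗ M`. -/
lemma flat_inter {W M : Type*} [AddCommGroup W] [Module R W] [AddCommGroup M] [Module R M]
    [Module.Flat R M] {U V : Submodule R W} (ΘU : ↥U ⊗[R] M) (ΘV : ↥V ⊗[R] M)
    (h : rTensor M U.subtype ΘU = rTensor M V.subtype ΘV) :
    ∃ (n : ℕ) (u : Fin n → W) (y : Fin n → M), (∀ s, u s ∈ U) ∧ (∀ s, u s ∈ V) ∧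
      rTensor M U.subtype ΘU = ∑ s, u s ⊗ₜ[R] y s := by
  classical
  set S : Submodule R W := U ⊔ V with hS
  set f : ↥(U ⊓ V) →ₗ[R] ↥U × ↥V :=
    (Submodule.inclusion inf_le_left).prod (Submodule.inclusion inf_le_right) with hf
  set g : ↥U × ↥V →ₗ[R] ↥S :=
    (Submodule.inclusion le_sup_left).comp (LinearMap.fst R ↥U ↥V)
      - (Submodule.inclusion le_sup_right).comp (LinearMap.snd R ↥U ↥V) with hg
  have hgval : ∀ p : ↥U × ↥V, ((g p : W)) = (p.1 : W) - (p.2 : W) := by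
    intro p; simp [hg, Submodule.coe_inclusion]
  have hexact0 : Function.Exact f g := by
    intro p
    constructor
    · intro hp
      have hval : (p.1 : W) = (p.2 : W) := by
        have := congrArg (Subtype.val) hp
        rw [hgval] at this
        simpa [sub_eq_zero] using this
      refine ⟨⟨(p.1 : W), ⟨p.1.2, hval ▸ p.2.2⟩⟩, ?_⟩
      apply Prod.ext
      · apply Subtype.ext
        simp [hf, Submodule.coe_inclusion]
      · apply Subtype.ext
        simpa [hf, Submodule.coe_inclusion] using hval
    · rintro ⟨c, rfl⟩
      apply Subtype.ext
      rw [hgval]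
      simp [hf, Submodule.coe_inclusion]
  have hgsurj : Function.Surjective g := by
    intro s
    obtain ⟨a, ha, b, hb, hab⟩ := Submodule.mem_sup.mp s.2
    refine ⟨(⟨a, ha⟩, ⟨-b, neg_mem hb⟩), ?_⟩
    apply Subtype.ext
    rw [hgval]
    simpa using hab
  have hexact : Function.Exact (rTensor M f) (rTensor M g) := rTensor_exact M hexact0 hgsurj
  set Θp : (↥U × ↥V) ⊗[R] M := (TensorProduct.prodLeft R R ↥U ↥V M).symm (ΘU, ΘV) with hΘp
  -- components of Θp under rTensor with fst/snd
  have hfst : rTensor M (LinearMap.fst R ↥U ↥V) Θp = ΘU := by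
    have key : ∀ ξ : (↥U × ↥V) ⊗[R] M,
        rTensor M (LinearMap.fst R ↥U ↥V) ξ = (TensorProduct.prodLeft R R ↥U ↥V M ξ).1 := by
      intro ξ
      induction ξ using TensorProduct.induction_on with
      | zero => simp
      | tmul p m => obtain ⟨p1, p2⟩ := p; simp
      | add a b ha hb => simp [ha, hb]
    rw [key, hΘp, LinearEquiv.apply_symm_apply]
  have hsnd : rTensor M (LinearMap.snd R ↥U ↥V) Θp = ΘV := by
    have key : ∀ ξ : (↥U × ↥V) ⊗[R] M,
        rTensor M (LinearMap.snd R ↥U ↥V) ξ = (TensorProduct.prodLeft R R ↥U ↥V M ξ).2 := by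
      intro ξ
      induction ξ using TensorProduct.induction_on with
      | zero => simp
      | tmul p m => obtain ⟨p1, p2⟩ := p; simp
      | add a b ha hb => simp [ha, hb]
    rw [key, hΘp, LinearEquiv.apply_symm_apply]
  have hg0 : rTensor M g Θp = 0 := by
    have hinj : Function.Injective (rTensor M S.subtype) :=
      Module.Flat.rTensor_preserves_injective_linearMap S.subtype S.injective_subtype
    apply hinj
    rw [map_zero, ← LinearMap.rTensor_comp_apply]
    have hcomp : S.subtype ∘ₗ g
        = U.subtype ∘ₗ (LinearMap.fst R ↥U ↥V) - V.subtype ∘ₗ (LinearMap.snd R ↥U ↥V) := by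
      ext p <;> simp [hg, Submodule.coe_inclusion]
    rw [hcomp]
    have : rTensor M (U.subtype ∘ₗ (LinearMap.fst R ↥U ↥V)
        - V.subtype ∘ₗ (LinearMap.snd R ↥U ↥V)) Θp
        = rTensor M (U.subtype ∘ₗ (LinearMap.fst R ↥U ↥V)) Θp
          - rTensor M (V.subtype ∘ₗ (LinearMap.snd R ↥U ↥V)) Θp := by
      rw [LinearMap.rTensor_sub]; rfl
    rw [this, LinearMap.rTensor_comp, LinearMap.rTensor_comp]
    simp only [LinearMap.comp_apply, hfst, hsnd]
    rw [h, sub_self]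
  obtain ⟨ω, hω⟩ := (hexact Θp).mp hg0
  obtain ⟨n, w, y, hrep⟩ := exists_fin_rep ω
  refine ⟨n, fun s => ((w s : W)), y, fun s => (w s).2.1, fun s => (w s).2.2, ?_⟩
  have : rTensor M U.subtype ΘU
      = rTensor M (U.subtype ∘ₗ (LinearMap.fst R ↥U ↥V) ∘ₗ f) ω := by
    rw [← hfst, ← hω, LinearMap.rTensor_comp, LinearMap.rTensor_comp]
    rfl
  rw [this]
  have hcomp2 : U.subtype ∘ₗ (LinearMap.fst R ↥U ↥V) ∘ₗ f = (U ⊓ V).subtype := by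
    ext c; simp [hf, Submodule.coe_inclusion]
  rw [hcomp2, hrep, map_sum]
  simp

end Helpers2

section Milnor
set_option linter.unusedSectionVars false

variable {A B C K : Type*} [CommRing A] [CommRing B] [CommRing C] [CommRing K]
    [Algebra A B] [Algebra A C] [Algebra A K] [Algebra B K] [Algebra C K]
    [IsScalarTower A B K] [IsScalarTower A C K]
    {MB MC : Type*}
    [AddCommGroup MB] [Module B MB] [Module A MB] [IsScalarTower A B MB]
    [AddCommGroup MC] [Module C MC] [Module A MC] [IsScalarTower A C MC]
    {M : Type*} [AddCommGroup M] [Module A M]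

section Basic

end Basic
end Milnor

section SmallLemmas

lemma tmulK_smulC {C K MC : Type*} [CommRing C] [CommRing K] [Algebra C K]
    [AddCommGroup MC] [Module C MC] (c : C) (n : MC) :
    (1 : K) ⊗ₜ[C] (c • n) = algebraMap C K c • ((1 : K) ⊗ₜ[C] n) := by
  calc (1 : K) ⊗ₜ[C] (c • n) = (c • (1 : K)) ⊗ₜ[C] n := (smul_tmul c (1 : K) n).symm
    _ = (algebraMap C K c) ⊗ₜ[C] n := by rw [Algebra.smul_def, mul_one]
    _ = algebraMap C K c • ((1 : K) ⊗ₜ[C] n) := by rw [smul_tmul', smul_eq_mul, mul_one]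

lemma tmulK_smulB {B K MB : Type*} [CommRing B] [CommRing K] [Algebra B K]
    [AddCommGroup MB] [Module B MB] (b : B) (x : MB) :
    (1 : K) ⊗ₜ[B] (b • x) = algebraMap B K b • ((1 : K) ⊗ₜ[B] x) := by
  calc (1 : K) ⊗ₜ[B] (b • x) = (b • (1 : K)) ⊗ₜ[B] x := (smul_tmul b (1 : K) x).symm
    _ = (algebraMap B K b) ⊗ₜ[B] x := by rw [Algebra.smul_def, mul_one]
    _ = algebraMap B K b • ((1 : K) ⊗ₜ[B] x) := by rw [smul_tmul', smul_eq_mul, mul_one]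

lemma πB_smul {A B M MB : Type*} [CommRing A] [CommRing B] [Algebra A B]
    [AddCommGroup M] [Module A M] [AddCommGroup MB] [Module B MB] [Module A MB]
    [IsScalarTower A B MB] (πB : M →ₗ[A] MB) (a : A) (m : M) :
    πB (a • m) = algebraMap A B a • πB m := by
  rw [map_smul, algebraMap_smul]

lemma πC_smul {A C M MC : Type*} [CommRing A] [CommRing C] [Algebra A C]
    [AddCommGroup M] [Module A M] [AddCommGroup MC] [Module C MC] [Module A MC]
    [IsScalarTower A C MC] (πC : M →ₗ[A] MC) (a : A) (m : M) :
    πC (a • m) = algebraMap A C a • πC m := by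
  rw [map_smul, algebraMap_smul]

end SmallLemmas

section Milnor
set_option linter.unusedSectionVars false

variable {A B C K : Type*} [CommRing A] [CommRing B] [CommRing C] [CommRing K]
    [Algebra A B] [Algebra A C] [Algebra A K] [Algebra B K] [Algebra C K]
    [IsScalarTower A B K] [IsScalarTower A C K]
    {MB MC : Type*}
    [AddCommGroup MB] [Module B MB] [Module A MB] [IsScalarTower A B MB]
    [AddCommGroup MC] [Module C MC] [Module A MC] [IsScalarTower A C MC]
    {M : Type*} [AddCommGroup M] [Module A M]

section Basic

variable (K) in
lemma Ainj (hpull : ∀ (b : B) (c : C), algebraMap B K b = algebraMap C K c →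
      ∃! a : A, algebraMap A B a = b ∧ algebraMap A C a = c) :
    ∀ a a' : A, algebraMap A B a = algebraMap A B a' →
      algebraMap A C a = algebraMap A C a' → a = a' := by
  intro a a' h1 h2
  have hcomp : algebraMap B K (algebraMap A B a) = algebraMap C K (algebraMap A C a) := by
    rw [← IsScalarTower.algebraMap_apply, ← IsScalarTower.algebraMap_apply]
  obtain ⟨a₀, -, hu⟩ := hpull (algebraMap A B a) (algebraMap A C a) hcomp
  rw [hu a ⟨rfl, rfl⟩, hu a' ⟨h1.symm, h2.symm⟩]

variable (K) in
lemma Akill (hpull : ∀ (b : B) (c : C), algebraMap B K b = algebraMap C K c →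
      ∃! a : A, algebraMap A B a = b ∧ algebraMap A C a = c) :
    ∀ a : A, algebraMap A B a = 0 → algebraMap A C a = 0 → a = 0 := by
  intro a h1 h2
  exact Ainj K hpull a 0 (by simpa using h1) (by simpa using h2)

lemma Alift (hpull : ∀ (b : B) (c : C), algebraMap B K b = algebraMap C K c →
      ∃! a : A, algebraMap A B a = b ∧ algebraMap A C a = c) :
    ∀ (b : B) (c : C), algebraMap B K b = algebraMap C K c →
      ∃ a : A, algebraMap A B a = b ∧ algebraMap A C a = c := by
  intro b c h
  obtain ⟨a, ha, -⟩ := hpull b c h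
  exact ⟨a, ha⟩

lemma AliftJ (hpull : ∀ (b : B) (c : C), algebraMap B K b = algebraMap C K c →
      ∃! a : A, algebraMap A B a = b ∧ algebraMap A C a = c) :
    ∀ c : C, algebraMap C K c = 0 →
      ∃ a : A, algebraMap A B a = 0 ∧ algebraMap A C a = c := by
  intro c hc
  exact Alift hpull 0 c (by simpa using hc.symm)

variable (θ : (K ⊗[B] MB) ≃ₗ[K] (K ⊗[C] MC)) (πB : M →ₗ[A] MB) (πC : M →ₗ[A] MC)

lemma Minj (hcompat : ∀ m : M, θ ((1 : K) ⊗ₜ[B] πB m) = (1 : K) ⊗ₜ[C] πC m)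
    (hfib : ∀ (x : MB) (y : MC), θ ((1 : K) ⊗ₜ[B] x) = (1 : K) ⊗ₜ[C] y →
      ∃! m : M, πB m = x ∧ πC m = y) :
    ∀ m m' : M, πB m = πB m' → πC m = πC m' → m = m' := by
  intro m m' h1 h2
  obtain ⟨m₀, -, hu⟩ := hfib (πB m) (πC m) (hcompat m)
  rw [hu m ⟨rfl, rfl⟩, hu m' ⟨h1.symm, h2.symm⟩]

lemma Mkill (hcompat : ∀ m : M, θ ((1 : K) ⊗ₜ[B] πB m) = (1 : K) ⊗ₜ[C] πC m)
    (hfib : ∀ (x : MB) (y : MC), θ ((1 : K) ⊗ₜ[B] x) = (1 : K) ⊗ₜ[C] y →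
      ∃! m : M, πB m = x ∧ πC m = y) :
    ∀ m : M, πB m = 0 → πC m = 0 → m = 0 := by
  intro m h1 h2
  exact Minj θ πB πC hcompat hfib m 0 (by simpa using h1) (by simpa using h2)

variable (MC) in
lemma clCsurj (hsurj : Function.Surjective (algebraMap C K)) :
    ∀ ξ : K ⊗[C] MC, ∃ n : MC, (1 : K) ⊗ₜ[C] n = ξ := by
  intro ξ
  induction ξ using TensorProduct.induction_on with
  | zero => exact ⟨0, by simp⟩
  | tmul k n =>
    obtain ⟨c, rfl⟩ := hsurj k
    exact ⟨c • n, by rw [tmulK_smulC, smul_tmul', smul_eq_mul, mul_one]⟩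
  | add ξ₁ ξ₂ h₁ h₂ =>
    obtain ⟨n₁, hn₁⟩ := h₁
    obtain ⟨n₂, hn₂⟩ := h₂
    exact ⟨n₁ + n₂, by rw [TensorProduct.tmul_add, hn₁, hn₂]⟩

lemma Msurj (hsurj : Function.Surjective (algebraMap C K))
    (hfib : ∀ (x : MB) (y : MC), θ ((1 : K) ⊗ₜ[B] x) = (1 : K) ⊗ₜ[C] y →
      ∃! m : M, πB m = x ∧ πC m = y) :
    ∀ x : MB, ∃ m : M, πB m = x := by
  intro x
  obtain ⟨n, hn⟩ := clCsurj MC hsurj (θ ((1 : K) ⊗ₜ[B] x))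
  obtain ⟨m, hm, -⟩ := hfib x n hn.symm
  exact ⟨m, hm.1⟩

lemma Mmk (hfib : ∀ (x : MB) (y : MC), θ ((1 : K) ⊗ₜ[B] x) = (1 : K) ⊗ₜ[C] y →
      ∃! m : M, πB m = x ∧ πC m = y) :
    ∀ (x : MB) (y : MC), θ ((1 : K) ⊗ₜ[B] x) = (1 : K) ⊗ₜ[C] y →
      ∃ m : M, πB m = x ∧ πC m = y := by
  intro x y h
  obtain ⟨m, hm, -⟩ := hfib x y h
  exact ⟨m, hm⟩

lemma MmkJ (hfib : ∀ (x : MB) (y : MC), θ ((1 : K) ⊗ₜ[B] x) = (1 : K) ⊗ₜ[C] y →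
      ∃! m : M, πB m = x ∧ πC m = y) :
    ∀ y : MC, (1 : K) ⊗ₜ[C] y = 0 → ∃ m : M, πB m = 0 ∧ πC m = y := by
  intro y h
  exact Mmk θ πB πC hfib 0 y (by simp [h.symm])

end Basic

end Milnor

section Milnor2
set_option linter.unusedSectionVars false

variable {A B C K : Type*} [CommRing A] [CommRing B] [CommRing C] [CommRing K]
    [Algebra A B] [Algebra A C] [Algebra A K] [Algebra B K] [Algebra C K]
    [IsScalarTower A B K] [IsScalarTower A C K]
    {MB MC : Type*}
    [AddCommGroup MB] [Module B MB] [Module A MB] [IsScalarTower A B MB]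
    [AddCommGroup MC] [Module C MC] [Module A MC] [IsScalarTower A C MC]
    {M : Type*} [AddCommGroup M] [Module A M]

variable (MC) in
/-- An element of `MC` killed by `K ⊗ -` lies in `J·MC`, with an explicit representation. -/
lemma kerClC_rep (hsurj : Function.Surjective (algebraMap C K))
    (n : MC) (hn : (1 : K) ⊗ₜ[C] n = 0) :
    ∃ (k : ℕ) (j : Fin k → C) (z : Fin k → MC),
      (∀ u, algebraMap C K (j u) = 0) ∧ n = ∑ u, j u • z u := by
  classical
  set ψ : C →ₗ[C] K := Algebra.linearMap C K with hψ
  have hsurj' : Function.Surjective ψ := hsurj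
  have hexact0 : Function.Exact (LinearMap.ker ψ).subtype ψ := LinearMap.exact_subtype_ker_map ψ
  have hexact := rTensor_exact (R := C) MC hexact0 hsurj'
  have hζ : LinearMap.rTensor MC ψ ((1 : C) ⊗ₜ[C] n) = 0 := by
    rw [LinearMap.rTensor_tmul]
    simpa [hψ] using hn
  obtain ⟨ω, hω⟩ := (hexact ((1 : C) ⊗ₜ[C] n)).mp hζ
  obtain ⟨k, j', z, hrep⟩ := exists_fin_rep ω
  refine ⟨k, fun u => (j' u : C), z, fun u => (j' u).2, ?_⟩
  have := congrArg (TensorProduct.lid C MC) hω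
  rw [hrep, map_sum] at this
  simp only [LinearMap.rTensor_tmul, Submodule.coe_subtype, TensorProduct.lid_tmul] at this
  simpa using this.symm

variable (K MB) in
/-- An element of a flat module `MB` killed by `K ⊗ -` lies in `ker(B→K)·MB`. -/
lemma kerClB_rep [Module.Flat B MB]
    (x : MB) (hx : (1 : K) ⊗ₜ[B] x = 0) :
    ∃ (k : ℕ) (b : Fin k → B) (w : Fin k → MB),
      (∀ u, algebraMap B K (b u) = 0) ∧ x = ∑ u, b u • w u := by
  classical
  set ψ : B →ₗ[B] K := Algebra.linearMap B K with hψ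
  have hexact0 : Function.Exact (LinearMap.ker ψ).subtype ψ := LinearMap.exact_subtype_ker_map ψ
  have hexact := Module.Flat.rTensor_exact (R := B) MB hexact0
  have hζ : LinearMap.rTensor MB ψ ((1 : B) ⊗ₜ[B] x) = 0 := by
    rw [LinearMap.rTensor_tmul]
    simpa [hψ] using hx
  obtain ⟨ω, hω⟩ := (hexact ((1 : B) ⊗ₜ[B] x)).mp hζ
  obtain ⟨k, b', w, hrep⟩ := exists_fin_rep ω
  refine ⟨k, fun u => (b' u : B), w, fun u => (b' u).2, ?_⟩
  have := congrArg (TensorProduct.lid B MB) hω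
  rw [hrep, map_sum] at this
  simp only [LinearMap.rTensor_tmul, Submodule.coe_subtype, TensorProduct.lid_tmul] at this
  simpa using this.symm

variable (K) in
/-- Trivialization of relations with coefficients in `J = ker (C → K)`, over `C`,
in the flat module `MC`. -/
lemma relJ_triv [Module.Flat C MC] {ι : Type*} [Fintype ι] (j : ι → C)
    (hj : ∀ u, algebraMap C K (j u) = 0) (z : ι → MC)
    (hrel : ∑ u, j u • z u = 0) :
    ∃ (n : ℕ) (c : ι → Fin n → C) (w : Fin n → MC),
      (∀ u, z u = ∑ t, c u t • w t) ∧ ∀ t, ∑ u, c u t * j u = 0 := by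
  classical
  set J : Ideal C := RingHom.ker (algebraMap C K) with hJ
  have hmem : ∀ u, j u ∈ J := fun u => hj u
  set elt : ↥J ⊗[C] MC := ∑ u, (⟨j u, hmem u⟩ : J) ⊗ₜ[C] z u with helt
  have helt0 : elt = 0 := by
    have hinj : Function.Injective (LinearMap.rTensor MC (J : Submodule C C).subtype) :=
      (Module.Flat.iff_rTensor_injective' (R := C) (M := MC)).mp inferInstance J
    apply hinj
    rw [map_zero, helt, map_sum]
    simp only [LinearMap.rTensor_tmul, Submodule.coe_subtype]
    have := congrArg (TensorProduct.lid C MC).symm hrel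
    rw [map_sum, map_zero] at this
    convert this using 2 with u
    · rw [TensorProduct.lid_symm_apply, TensorProduct.tmul_smul, smul_tmul', smul_eq_mul,
        mul_one]
  obtain ⟨n, c, w, hexp, hcol⟩ := flat_vanishing (R := C) (X := ↥J)
    (fun u => (⟨j u, hmem u⟩ : J)) z helt0
  refine ⟨n, c, w, hexp, ?_⟩
  intro t
  have := congrArg (Subtype.val) (hcol t)
  simpa [Submodule.coe_smul, smul_eq_mul] using this

end Milnor2

lemma sum_sigma_univ {α : Type*} [Fintype α] {β : α → Type*} [∀ a, Fintype (β a)]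
    {M : Type*} [AddCommMonoid M] (f : (Σ a, β a) → M) :
    ∑ p, f p = ∑ a, ∑ b, f ⟨a, b⟩ := by
  rw [← Finset.univ_sigma_univ, Finset.sum_sigma]

section Milnor3
set_option linter.unusedSectionVars false

variable {A B C K : Type*} [CommRing A] [CommRing B] [CommRing C] [CommRing K]
    [Algebra A B] [Algebra A C] [Algebra A K] [Algebra B K] [Algebra C K]
    [IsScalarTower A B K] [IsScalarTower A C K]
    {MB MC : Type*}
    [AddCommGroup MB] [Module B MB] [Module A MB] [IsScalarTower A B MB]
    [AddCommGroup MC] [Module C MC] [Module A MC] [IsScalarTower A C MC]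
    {M : Type*} [AddCommGroup M] [Module A M]

/-- Decomposition: every element of `MC` is a `C`-combination of elements of `πC(M)`
plus an element killed by `K ⊗ -`. -/
lemma DC (θ : (K ⊗[B] MB) ≃ₗ[K] (K ⊗[C] MC)) (πB : M →ₗ[A] MB) (πC : M →ₗ[A] MC)
    (hsurj : Function.Surjective (algebraMap C K))
    (hcompat : ∀ m : M, θ ((1 : K) ⊗ₜ[B] πB m) = (1 : K) ⊗ₜ[C] πC m)
    (hfib : ∀ (x : MB) (y : MC), θ ((1 : K) ⊗ₜ[B] x) = (1 : K) ⊗ₜ[C] y →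
      ∃! m : M, πB m = x ∧ πC m = y)
    (n : MC) :
    ∃ (k : ℕ) (c : Fin k → C) (X : Fin k → M) (v : MC),
      (1 : K) ⊗ₜ[C] v = 0 ∧ n = ∑ r, c r • πC (X r) + v := by
  classical
  obtain ⟨k, kk, x, hξ⟩ := exists_fin_rep (θ.symm ((1 : K) ⊗ₜ[C] n))
  choose c hc using fun r => hsurj (kk r)
  choose X hX using fun r => Msurj θ πB πC hsurj hfib (x r)
  refine ⟨k, c, X, n - ∑ r, c r • πC (X r), ?_, by abel⟩
  rw [TensorProduct.tmul_sub, TensorProduct.tmul_sum, sub_eq_zero]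
  have hterm : ∀ r, (1 : K) ⊗ₜ[C] (c r • πC (X r)) = kk r • (θ ((1 : K) ⊗ₜ[B] x r)) := by
    intro r
    rw [tmulK_smulC, hc, ← hX r, hcompat (X r)]
  rw [Finset.sum_congr rfl (fun r _ => hterm r)]
  have : ∑ r, kk r • θ ((1 : K) ⊗ₜ[B] x r) = θ (∑ r, kk r ⊗ₜ[B] x r) := by
    rw [map_sum]
    refine Finset.sum_congr rfl (fun r _ => ?_)
    rw [← map_smul, smul_tmul', smul_eq_mul, mul_one]
  rw [this, ← hξ, LinearEquiv.apply_symm_apply]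

end Milnor3

section Milnor4
set_option linter.unusedSectionVars false
set_option maxHeartbeats 1000000

variable {A B C K : Type*} [CommRing A] [CommRing B] [CommRing C] [CommRing K]
    [Algebra A B] [Algebra A C] [Algebra A K] [Algebra B K] [Algebra C K]
    [IsScalarTower A B K] [IsScalarTower A C K]
    {MB MC : Type*}
    [AddCommGroup MB] [Module B MB] [Module A MB] [IsScalarTower A B MB]
    [AddCommGroup MC] [Module C MC] [Module A MC] [IsScalarTower A C MC]
    {M : Type*} [AddCommGroup M] [Module A M]

/-- Trivialization of relations in `M` whose coefficients die in `B`. -/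
lemma glued_triv_J [Module.Flat B MB] [Module.Flat C MC]
    (θ : (K ⊗[B] MB) ≃ₗ[K] (K ⊗[C] MC)) (πB : M →ₗ[A] MB) (πC : M →ₗ[A] MC)
    (hsurj : Function.Surjective (algebraMap C K))
    (hpull : ∀ (b : B) (c : C), algebraMap B K b = algebraMap C K c →
      ∃! a : A, algebraMap A B a = b ∧ algebraMap A C a = c)
    (hcompat : ∀ m : M, θ ((1 : K) ⊗ₜ[B] πB m) = (1 : K) ⊗ₜ[C] πC m)
    (hfib : ∀ (x : MB) (y : MC), θ ((1 : K) ⊗ₜ[B] x) = (1 : K) ⊗ₜ[C] y →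
      ∃! m : M, πB m = x ∧ πC m = y)
    {E : Type} [Fintype E] [DecidableEq E] (h : E → A) (hB0 : ∀ e, algebraMap A B (h e) = 0)
    (N : E → M) (hrel : ∑ e, h e • N e = 0) :
    ∃ (τ : Type) (_ : Fintype τ) (a : E → τ → A) (z : τ → M),
      (∀ e, N e = ∑ t, a e t • z t) ∧ ∀ t, ∑ e, h e * a e t = 0 := by
  classical
  set η : E → C := fun e => algebraMap A C (h e) with hηdef
  have hηval : ∀ e, algebraMap A C (h e) = η e := fun _ => rfl
  have hη0 : ∀ e, algebraMap C K (η e) = 0 := by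
    intro e
    rw [hηdef, ← IsScalarTower.algebraMap_apply A C K,
      IsScalarTower.algebraMap_apply A B K, hB0, map_zero]
  -- Step 2.1 : trivialize the relation over C
  have hrelC : ∑ e, η e • πC (N e) = 0 := by
    have h0 := congrArg πC hrel
    rw [map_sum, map_zero] at h0
    rw [← h0]
    exact Finset.sum_congr rfl fun e _ => (πC_smul (C := C) πC (h e) (N e)).symm
  obtain ⟨nT, c, nn, hc1, hc2⟩ := relJ_triv K η hη0 (fun e => πC (N e)) hrelC
  -- Step 2.2 : absorb generators into πC(M) modulo J·MC
  choose kD cD XD vD hvD hDCrep using fun t => DC θ πB πC hsurj hcompat hfib (nn t)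
  set T' := (Σ t : Fin nT, Fin (kD t)) with hT'
  set σ : E → T' → C := fun e p => c e p.1 * cD p.1 p.2 with hσdef
  set Z : T' → M := fun p => XD p.1 p.2 with hZdef
  set w : E → MC := fun e => ∑ t, c e t • vD t with hwdef
  have hr1 : ∀ e, πC (N e) = (∑ p, σ e p • πC (Z p)) + w e := by
    intro e
    rw [hc1 e, hwdef]
    rw [sum_sigma_univ (fun p : T' => σ e p • πC (Z p))]
    rw [← Finset.sum_add_distrib]
    refine Finset.sum_congr rfl fun t _ => ?_
    rw [hDCrep t, smul_add, Finset.smul_sum]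
    congr 1
    refine Finset.sum_congr rfl fun r _ => ?_
    rw [hσdef, hZdef, smul_smul]
  have hr2 : ∀ p : T', ∑ e, η e * σ e p = 0 := by
    intro p
    have : ∀ e, η e * σ e p = (c e p.1 * η e) * cD p.1 p.2 := fun e => by
      rw [hσdef]; ring
    rw [Finset.sum_congr rfl fun e _ => this e, ← Finset.sum_mul, hc2, zero_mul]
  have hw0 : ∀ e, (1 : K) ⊗ₜ[C] w e = 0 := by
    intro e
    rw [hwdef, TensorProduct.tmul_sum]
    rw [Finset.sum_congr rfl fun t _ => tmulK_smulC (c e t) (vD t)]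
    rw [Finset.sum_congr rfl fun t _ => by rw [hvD t, smul_zero]]
    exact Finset.sum_const_zero
  -- key identity in K ⊗[B] MB
  have hkey : ∀ e, (1 : K) ⊗ₜ[B] (πB (N e)) = ∑ p, (algebraMap C K (σ e p)) ⊗ₜ[B] (πB (Z p)) := by
    intro e
    apply θ.injective
    rw [hcompat (N e), map_sum]
    rw [hr1 e, TensorProduct.tmul_add, hw0, add_zero, TensorProduct.tmul_sum]
    refine Finset.sum_congr rfl fun p _ => ?_
    rw [tmulK_smulC]
    rw [show (algebraMap C K (σ e p)) ⊗ₜ[B] (πB (Z p))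
        = algebraMap C K (σ e p) • ((1 : K) ⊗ₜ[B] (πB (Z p))) by
      rw [smul_tmul', smul_eq_mul, mul_one]]
    rw [map_smul, hcompat (Z p)]
  -- Stage 1: alignment via the flat intersection lemma over B
  set σbar : T' → (E → K) := fun p e => algebraMap C K (σ e p) with hσbar
  set UK : Submodule K (E → K) := Submodule.span K (Set.range σbar) with hUK
  set U : Submodule B (E → K) := UK.restrictScalars B with hU
  set V : Submodule B (E → K) := Submodule.pi Set.univ
    (fun _ => LinearMap.range (Algebra.linearMap B K)) with hV
  have memU : ∀ p : T', σbar p ∈ U := fun p =>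
    Submodule.subset_span (Set.mem_range_self p)
  have memV : ∀ e : E, (Pi.single e (1 : K) : E → K) ∈ V := by
    intro e
    rw [hV, Submodule.mem_pi]
    intro i _
    rcases eq_or_ne i e with rfl | hne
    · rw [Pi.single_eq_same]; exact ⟨1, by simp⟩
    · rw [Pi.single_eq_of_ne hne]; exact ⟨0, by simp⟩
  set ΘU : ↥U ⊗[B] MB := ∑ p, (⟨σbar p, memU p⟩ : U) ⊗ₜ[B] πB (Z p) with hΘU
  set ΘV : ↥V ⊗[B] MB := ∑ e, (⟨Pi.single e (1 : K), memV e⟩ : V) ⊗ₜ[B] πB (N e) with hΘV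
  -- the component extraction machinery
  set Φ1 := TensorProduct.comm B (E → K) MB with hΦ1
  set Φ2 := TensorProduct.piRight B B MB (fun _ : E => K) with hΦ2
  have hΦtmul : ∀ (u : E → K) (x : MB) (e : E), Φ2 (Φ1 (u ⊗ₜ[B] x)) e = x ⊗ₜ[B] (u e) := by
    intro u x e
    rw [hΦ1, hΦ2]
    simp only [TensorProduct.comm_tmul, TensorProduct.piRight_apply,
      TensorProduct.piRightHom_tmul]
  have hkey2 : ∀ e, (πB (N e)) ⊗ₜ[B] (1 : K) = ∑ p, (πB (Z p)) ⊗ₜ[B] (algebraMap C K (σ e p)) := by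
    intro e
    have hc := congrArg (TensorProduct.comm B K MB) (hkey e)
    rw [map_sum] at hc
    simpa using hc
  have himg : LinearMap.rTensor MB U.subtype ΘU = LinearMap.rTensor MB V.subtype ΘV := by
    apply Φ1.injective
    apply Φ2.injective
    funext e
    rw [hΘU, hΘV]
    simp only [map_sum, Finset.sum_apply]
    have hL : ∀ p : T', Φ2 (Φ1 (LinearMap.rTensor MB U.subtype
        ((⟨σbar p, memU p⟩ : U) ⊗ₜ[B] πB (Z p)))) e = (πB (Z p)) ⊗ₜ[B] (σbar p e) := by
      intro p
      rw [LinearMap.rTensor_tmul, Submodule.coe_subtype]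
      exact hΦtmul _ _ _
    have hR : ∀ e' : E, Φ2 (Φ1 (LinearMap.rTensor MB V.subtype
        ((⟨Pi.single e' (1 : K), memV e'⟩ : V) ⊗ₜ[B] πB (N e')))) e
        = (πB (N e')) ⊗ₜ[B] ((Pi.single e' (1 : K) : E → K) e) := by
      intro e'
      rw [LinearMap.rTensor_tmul, Submodule.coe_subtype]
      exact hΦtmul _ _ _
    rw [Finset.sum_congr rfl fun p _ => hL p, Finset.sum_congr rfl fun e' _ => hR e']
    rw [Finset.sum_eq_single e (fun e' _ hne => by
        rw [Pi.single_eq_of_ne (Ne.symm hne), TensorProduct.tmul_zero])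
      (fun hmem => absurd (Finset.mem_univ e) hmem)]
    rw [Pi.single_eq_same, hkey2 e]
  obtain ⟨nS, u, y, hu_inU, hu_inV, hUrep⟩ := flat_inter (R := B) ΘU ΘV himg
  -- extract the componentwise consequence
  have hext : ∀ e, (1 : K) ⊗ₜ[B] (πB (N e)) = ∑ s, (u s e) ⊗ₜ[B] (y s) := by
    intro e
    have h1 : LinearMap.rTensor MB V.subtype ΘV = ∑ s, u s ⊗ₜ[B] y s := by
      rw [← himg, hUrep]
    have h2 := congrArg (fun ξ => Φ2 (Φ1 ξ) e) h1
    rw [hΘV] at h2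
    simp only [map_sum, Finset.sum_apply] at h2
    have hR : ∀ e' : E, Φ2 (Φ1 (LinearMap.rTensor MB V.subtype
        ((⟨Pi.single e' (1 : K), memV e'⟩ : V) ⊗ₜ[B] πB (N e')))) e
        = (πB (N e')) ⊗ₜ[B] ((Pi.single e' (1 : K) : E → K) e) := by
      intro e'
      rw [LinearMap.rTensor_tmul, Submodule.coe_subtype]
      exact hΦtmul _ _ _
    rw [Finset.sum_congr rfl (fun e' _ => hR e'),
      Finset.sum_congr rfl (fun s _ => hΦtmul (u s) (y s) e)] at h2
    rw [Finset.sum_eq_single e (fun e' _ hne => by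
        rw [Pi.single_eq_of_ne (Ne.symm hne), TensorProduct.tmul_zero])
      (fun hmem => absurd (Finset.mem_univ e) hmem), Pi.single_eq_same] at h2
    have h3 := congrArg (TensorProduct.comm B MB K) h2
    rw [map_sum] at h3
    simpa using h3
  -- construct the A-coefficient matrix α
  have hu_inUK : ∀ s, u s ∈ UK := fun s => hu_inU s
  choose kk hkk using fun s => (Submodule.mem_span_range_iff_exists_fun K).mp (hu_inUK s)
  choose cc hcc using fun s p => hsurj (kk s p)
  set αC : E → Fin nS → C := fun e s => ∑ p, cc s p * σ e p with hαCdef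
  have hαCcol : ∀ s, ∑ e, η e * αC e s = 0 := by
    intro s
    have hterm : ∀ e, η e * αC e s = ∑ p, cc s p * (η e * σ e p) := by
      intro e
      rw [hαCdef]
      simp only
      rw [Finset.mul_sum]
      exact Finset.sum_congr rfl fun p _ => by ring
    rw [Finset.sum_congr rfl fun e _ => hterm e, Finset.sum_comm]
    rw [Finset.sum_congr rfl fun p _ => by rw [← Finset.mul_sum, hr2 p, mul_zero]]
    exact Finset.sum_const_zero
  have hαCval : ∀ e s, algebraMap C K (αC e s) = u s e := by
    intro e s
    rw [hαCdef]
    simp only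
    rw [map_sum]
    have hterm : ∀ p, algebraMap C K (cc s p * σ e p) = kk s p • σbar p e := by
      intro p
      rw [map_mul, hcc, hσbar, smul_eq_mul]
    rw [Finset.sum_congr rfl fun p _ => hterm p]
    have h4 := congrFun (hkk s) e
    rw [Finset.sum_apply] at h4
    rw [← h4]
    exact Finset.sum_congr rfl fun p _ => by rw [Pi.smul_apply]
  choose β hβ using fun s e => Submodule.mem_pi.mp (hu_inV s) e (Set.mem_univ e)
  have hβval : ∀ s e, algebraMap B K (β s e) = u s e := fun s e => hβ s e
  choose α hαB hαC2 using fun (e : E) (s : Fin nS) =>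
    Alift hpull (β s e) (αC e s) (by rw [hβval, hαCval])
  choose zY hzY using fun s => clCsurj MC hsurj (θ ((1 : K) ⊗ₜ[B] y s))
  choose Y' hY'B hY'C using fun s => Mmk θ πB πC hfib (y s) (zY s) (hzY s).symm
  have hcol : ∀ s, ∑ e, h e * α e s = 0 := by
    intro s
    apply Akill K hpull
    · rw [map_sum, Finset.sum_congr rfl fun e _ => by rw [map_mul, hB0, zero_mul]]
      exact Finset.sum_const_zero
    · rw [map_sum, Finset.sum_congr rfl fun e _ => by rw [map_mul, hαC2]]
      exact hαCcol s
  -- the defect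
  set d : E → M := fun e => N e - ∑ s, α e s • Y' s with hddef
  have hdB : ∀ e, (1 : K) ⊗ₜ[B] πB (d e) = 0 := by
    intro e
    rw [hddef]
    simp only
    rw [map_sub, map_sum, TensorProduct.tmul_sub, TensorProduct.tmul_sum]
    have hterm2 : ∀ s : Fin nS, (1 : K) ⊗ₜ[B] (πB (α e s • Y' s)) = (u s e) ⊗ₜ[B] y s := by
      intro s
      rw [πB_smul (B := B) πB, hαB, hY'B, tmulK_smulB, hβval, smul_tmul', smul_eq_mul, mul_one]
    rw [Finset.sum_congr rfl fun s _ => hterm2 s, hext e, sub_self]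
  have hdC : ∀ e, (1 : K) ⊗ₜ[C] πC (d e) = 0 := by
    intro e
    have h5 := hcompat (d e)
    rw [hdB e, map_zero] at h5
    exact h5.symm
  have hdrel : ∑ e, h e • d e = 0 := by
    rw [hddef]
    simp only [smul_sub]
    rw [Finset.sum_sub_distrib, hrel, zero_sub, neg_eq_zero]
    rw [Finset.sum_congr rfl fun e _ => Finset.smul_sum, Finset.sum_comm]
    rw [Finset.sum_congr rfl fun s _ => show
        ∑ e, h e • (α e s • Y' s) = 0 by
      rw [Finset.sum_congr rfl fun e _ => smul_smul (h e) (α e s) (Y' s), ← Finset.sum_smul,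
        hcol s, zero_smul]]
    exact Finset.sum_const_zero
  -- split the defect
  choose uu huuB huuC using fun e => MmkJ θ πB πC hfib (πC (d e)) (hdC e)
  set v : E → M := fun e => d e - uu e with hvdef
  have hvB : ∀ e, πB (v e) = πB (d e) := by
    intro e; rw [hvdef]; simp only [map_sub, huuB, sub_zero]
  have hvC : ∀ e, πC (v e) = 0 := by
    intro e; rw [hvdef]; simp only [map_sub, huuC, sub_self]
  have hsumC : ∑ e, η e • πC (d e) = 0 := by
    have h6 := congrArg πC hdrel
    rw [map_sum, map_zero] at h6
    rw [← h6]
    exact Finset.sum_congr rfl fun e _ => (πC_smul (C := C) πC (h e) (d e)).symm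
  have hurel : ∑ e, h e • uu e = 0 := by
    apply Mkill θ πB πC hcompat hfib
    · rw [map_sum, Finset.sum_congr rfl fun e _ => by rw [πB_smul (B := B) πB, huuB, smul_zero]]
      exact Finset.sum_const_zero
    · rw [map_sum, Finset.sum_congr rfl fun e _ => by rw [πC_smul (C := C) πC, huuC]]
      exact hsumC
  -- Step 2.5 : trivialize the `uu` part
  choose kJ jJ zJ hjJ hdJ using fun e => kerClC_rep MC hsurj (πC (d e)) (hdC e)
  have hrelJ2 : ∑ p : (Σ e : E, Fin (kJ e)), (η p.1 * jJ p.1 p.2) • zJ p.1 p.2 = 0 := by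
    rw [sum_sigma_univ fun p : (Σ e : E, Fin (kJ e)) => (η p.1 * jJ p.1 p.2) • zJ p.1 p.2]
    rw [Finset.sum_congr rfl fun e _ => show
        ∑ b, (η e * jJ e b) • zJ e b = η e • πC (d e) by
      rw [hdJ e, Finset.smul_sum]
      exact Finset.sum_congr rfl fun b _ => mul_smul (η e) (jJ e b) (zJ e b)]
    exact hsumC
  obtain ⟨nW, ccc, nn2, hlv1, hlv2⟩ := relJ_triv K
    (fun p : (Σ e : E, Fin (kJ e)) => η p.1 * jJ p.1 p.2)
    (fun p => by rw [map_mul, hη0, zero_mul])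
    (fun p => zJ p.1 p.2) hrelJ2
  set γ : E → Fin nW → C := fun e t => ∑ b, jJ e b * ccc ⟨e, b⟩ t with hγdef
  have hγ0 : ∀ e t, algebraMap C K (γ e t) = 0 := by
    intro e t
    rw [hγdef]
    simp only
    rw [map_sum, Finset.sum_congr rfl fun b _ => by rw [map_mul, hjJ e b, zero_mul]]
    exact Finset.sum_const_zero
  have hγ1 : ∀ e, πC (d e) = ∑ t, γ e t • nn2 t := by
    intro e
    rw [hdJ e]
    rw [Finset.sum_congr rfl fun b _ => by rw [hlv1 ⟨e, b⟩, Finset.smul_sum]]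
    rw [Finset.sum_comm]
    refine Finset.sum_congr rfl fun t _ => ?_
    rw [hγdef]
    simp only
    rw [Finset.sum_smul]
    exact Finset.sum_congr rfl fun b _ => smul_smul (jJ e b) (ccc ⟨e, b⟩ t) (nn2 t)
  have hγ2 : ∀ t, ∑ e, η e * γ e t = 0 := by
    intro t
    have h7 := hlv2 t
    rw [sum_sigma_univ fun p : (Σ e : E, Fin (kJ e)) =>
      ccc p t * (η p.1 * jJ p.1 p.2)] at h7
    rw [← h7]
    refine Finset.sum_congr rfl fun e _ => ?_
    rw [hγdef]
    simp only
    rw [Finset.mul_sum]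
    exact Finset.sum_congr rfl fun b _ => by ring
  choose kDw cDw XDw vDw hvDw hDCw using fun t => DC θ πB πC hsurj hcompat hfib (nn2 t)
  choose Λ hΛB hΛC using fun (e : E) (q : Σ t : Fin nW, Fin (kDw t)) =>
    AliftJ hpull (γ e q.1 * cDw q.1 q.2) (by rw [map_mul, hγ0, zero_mul])
  choose Λ' hΛ'B hΛ'C using fun (e : E) (t : Fin nW) => AliftJ hpull (γ e t) (hγ0 e t)
  choose VW hVWB hVWC using fun t => MmkJ θ πB πC hfib (vDw t) (hvDw t)
  set aU : E → ((Σ t : Fin nW, Fin (kDw t)) ⊕ Fin nW) → A := fun e =>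
    Sum.elim (fun q => Λ e q) (fun t => Λ' e t) with haU
  set zU : ((Σ t : Fin nW, Fin (kDw t)) ⊕ Fin nW) → M :=
    Sum.elim (fun q => XDw q.1 q.2) (fun t => VW t) with hzU
  have haUB : ∀ e x, algebraMap A B (aU e x) = 0 := by
    intro e x
    cases x with
    | inl q => exact hΛB e q
    | inr t => exact hΛ'B e t
  have hexprU : ∀ e, uu e = ∑ x, aU e x • zU x := by
    intro e
    apply Minj θ πB πC hcompat hfib
    · rw [huuB e, map_sum]
      rw [Finset.sum_congr rfl fun x _ => by
        rw [πB_smul (B := B) πB, haUB e x, zero_smul]]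
      exact Finset.sum_const_zero.symm
    · rw [huuC e, hγ1 e]
      rw [map_sum]
      have hinl : ∀ q : (Σ t : Fin nW, Fin (kDw t)),
          πC (aU e (Sum.inl q) • zU (Sum.inl q))
            = (γ e q.1 * cDw q.1 q.2) • πC (XDw q.1 q.2) := by
        intro q
        rw [πC_smul (C := C) πC, show aU e (Sum.inl q) = Λ e q from rfl,
          show zU (Sum.inl q) = XDw q.1 q.2 from rfl, hΛC]
      have hinr : ∀ t : Fin nW, πC (aU e (Sum.inr t) • zU (Sum.inr t)) = γ e t • vDw t := by
        intro t
        rw [πC_smul (C := C) πC, show aU e (Sum.inr t) = Λ' e t from rfl,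
          show zU (Sum.inr t) = VW t from rfl, hΛ'C, hVWC]
      rw [Fintype.sum_sum_type]
      rw [Finset.sum_congr rfl fun q _ => hinl q, Finset.sum_congr rfl fun t _ => hinr t]
      rw [sum_sigma_univ fun q : (Σ t : Fin nW, Fin (kDw t)) =>
        (γ e q.1 * cDw q.1 q.2) • πC (XDw q.1 q.2)]
      rw [← Finset.sum_add_distrib]
      refine Finset.sum_congr rfl fun t _ => ?_
      rw [hDCw t, smul_add, Finset.smul_sum]
      congr 1
      exact Finset.sum_congr rfl fun r _ => smul_smul (γ e t) (cDw t r) (πC (XDw t r))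
  have hcolU : ∀ x, ∑ e, h e * aU e x = 0 := by
    intro x
    apply Akill K hpull
    · rw [map_sum, Finset.sum_congr rfl fun e _ => by rw [map_mul, hB0, zero_mul]]
      exact Finset.sum_const_zero
    · rw [map_sum]
      cases x with
      | inl q =>
        rw [Finset.sum_congr rfl fun e _ => by
          rw [map_mul, show aU e (Sum.inl q) = Λ e q from rfl, hΛC]]
        calc ∑ e, algebraMap A C (h e) * (γ e q.1 * cDw q.1 q.2)
            = (∑ e, η e * γ e q.1) * cDw q.1 q.2 := by
              rw [Finset.sum_mul]
              exact Finset.sum_congr rfl fun e _ => by rw [hηval]; ring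
          _ = 0 := by rw [hγ2, zero_mul]
      | inr t =>
        rw [Finset.sum_congr rfl fun e _ => by
          rw [map_mul, show aU e (Sum.inr t) = Λ' e t from rfl, hΛ'C]]
        simp only [hηval]
        exact hγ2 t
  -- Step 2.6 : trivialize the `v` part
  choose kb bb xb hbb hdb using fun e => kerClB_rep K MB (πB (d e)) (hdB e)
  choose aW haWB haWC using fun p : (Σ e : E, Fin (kb e)) =>
    Alift hpull (bb p.1 p.2) 0 (by rw [hbb, map_zero])
  choose X' hX' using fun p : (Σ e : E, Fin (kb e)) =>
    Msurj θ πB πC hsurj hfib (xb p.1 p.2)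
  set aV : E → (Σ e : E, Fin (kb e)) → A :=
    fun e p => if e = p.1 then aW p else 0 with haV
  have haVC : ∀ e p, algebraMap A C (aV e p) = 0 := by
    intro e p
    rw [haV]
    simp only
    split
    · exact haWC p
    · exact map_zero _
  have hexprV : ∀ e, v e = ∑ p, aV e p • X' p := by
    intro e
    apply Minj θ πB πC hcompat hfib
    · rw [hvB e, map_sum]
      rw [Finset.sum_congr rfl fun p _ => πB_smul (B := B) πB (aV e p) (X' p)]
      rw [sum_sigma_univ fun p : (Σ e : E, Fin (kb e)) =>
        algebraMap A B (aV e p) • πB (X' p)]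
      rw [Finset.sum_eq_single e (fun e' _ hne => by
          rw [Finset.sum_congr rfl fun b _ => show
            algebraMap A B (aV e ⟨e', b⟩) • πB (X' ⟨e', b⟩) = 0 by
              simp [haV, Ne.symm hne]]
          exact Finset.sum_const_zero)
        (fun hmem => absurd (Finset.mem_univ e) hmem)]
      rw [hdb e]
      refine Finset.sum_congr rfl fun b _ => ?_
      have h8 : aV e ⟨e, b⟩ = aW ⟨e, b⟩ := by simp [haV]
      rw [h8, haWB ⟨e, b⟩, hX' ⟨e, b⟩]
    · rw [hvC e, map_sum]
      rw [Finset.sum_congr rfl fun p _ => by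
        rw [πC_smul (C := C) πC, haVC e p, zero_smul]]
      exact Finset.sum_const_zero.symm
  have hcolV : ∀ p, ∑ e, h e * aV e p = 0 := by
    intro p
    rw [Finset.sum_eq_single p.1 (fun e' _ hne => by simp [haV, hne])
      (fun hmem => absurd (Finset.mem_univ p.1) hmem)]
    have h9 : aV p.1 p = aW p := by simp [haV]
    rw [h9]
    apply Akill K hpull
    · rw [map_mul, hB0, zero_mul]
    · rw [map_mul, haWC, mul_zero]
  -- Final assembly
  refine ⟨Fin nS ⊕ (((Σ t : Fin nW, Fin (kDw t)) ⊕ Fin nW) ⊕ (Σ e : E, Fin (kb e))),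
    inferInstance,
    fun e => Sum.elim (fun s => α e s) (Sum.elim (fun xu => aU e xu) (fun p => aV e p)),
    Sum.elim (fun s => Y' s) (Sum.elim zU X'), ?_, ?_⟩
  · intro e
    rw [Fintype.sum_sum_type]
    simp only [Sum.elim_inl, Sum.elim_inr]
    rw [Fintype.sum_sum_type]
    simp only [Sum.elim_inl, Sum.elim_inr]
    rw [← hexprU e, ← hexprV e]
    have : d e = uu e + v e := by rw [hvdef]; simp only; abel
    rw [← this]
    rw [hddef]
    simp only
    abel
  · intro x
    cases x with
    | inl s => simpa only [Sum.elim_inl] using hcol s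
    | inr x' =>
      cases x' with
      | inl xu => simpa only [Sum.elim_inr, Sum.elim_inl] using hcolU xu
      | inr p => simpa only [Sum.elim_inr] using hcolV p

end Milnor4

section Milnor5
set_option linter.unusedSectionVars false
set_option maxHeartbeats 1000000

variable {A B C K : Type*} [CommRing A] [CommRing B] [CommRing C] [CommRing K]
    [Algebra A B] [Algebra A C] [Algebra A K] [Algebra B K] [Algebra C K]
    [IsScalarTower A B K] [IsScalarTower A C K]
    {MB MC : Type*}
    [AddCommGroup MB] [Module B MB] [Module A MB] [IsScalarTower A B MB]
    [AddCommGroup MC] [Module C MC] [Module A MC] [IsScalarTower A C MC]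
    {M : Type*} [AddCommGroup M] [Module A M]

/-- Every relation in the glued module `M` is trivial. -/
lemma glued_triv [Module.Flat B MB] [Module.Flat C MC]
    (θ : (K ⊗[B] MB) ≃ₗ[K] (K ⊗[C] MC)) (πB : M →ₗ[A] MB) (πC : M →ₗ[A] MC)
    (hsurj : Function.Surjective (algebraMap C K))
    (hpull : ∀ (b : B) (c : C), algebraMap B K b = algebraMap C K c →
      ∃! a : A, algebraMap A B a = b ∧ algebraMap A C a = c)
    (hcompat : ∀ m : M, θ ((1 : K) ⊗ₜ[B] πB m) = (1 : K) ⊗ₜ[C] πC m)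
    (hfib : ∀ (x : MB) (y : MC), θ ((1 : K) ⊗ₜ[B] x) = (1 : K) ⊗ₜ[C] y →
      ∃! m : M, πB m = x ∧ πC m = y)
    {nι : ℕ} (f : Fin nι → A) (m : Fin nι → M) (hrel : ∑ i, f i • m i = 0) :
    ∃ (τ : Type) (_ : Fintype τ) (a : Fin nι → τ → A) (z : τ → M),
      (∀ i, m i = ∑ t, a i t • z t) ∧ ∀ t, ∑ i, f i * a i t = 0 := by
  classical
  -- Round 1 : trivialize over B
  have hrelB : ∑ i, (algebraMap A B (f i)) • πB (m i) = 0 := by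
    have h0 := congrArg πB hrel
    rw [map_sum, map_zero] at h0
    rw [← h0]
    exact Finset.sum_congr rfl fun i _ => (πB_smul (B := B) πB (f i) (m i)).symm
  have hvan : ∑ i, (algebraMap A B (f i)) ⊗ₜ[B] (πB (m i)) = (0 : B ⊗[B] MB) := by
    apply (TensorProduct.lid B MB).injective
    rw [map_sum, map_zero]
    rw [Finset.sum_congr rfl fun i _ =>
      TensorProduct.lid_tmul (πB (m i)) (algebraMap A B (f i))]
    exact hrelB
  obtain ⟨nκ, b, x, hb1, hb2⟩ := flat_vanishing (R := B) (X := B)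
    (fun i => algebraMap A B (f i)) (fun i => πB (m i)) hvan
  have hliftB : ∀ (bb : B), ∃ a : A, algebraMap A B a = bb := by
    intro bb
    obtain ⟨cc, hcc⟩ := hsurj (algebraMap B K bb)
    obtain ⟨a, ha1, -⟩ := Alift hpull bb cc hcc.symm
    exact ⟨a, ha1⟩
  choose aB haB using fun (i : Fin nι) (j : Fin nκ) => hliftB (b i j)
  choose Y hY using fun j => Msurj θ πB πC hsurj hfib (x j)
  set g : Fin nκ → A := fun j => ∑ i, f i * aB i j with hgdef
  have hgB : ∀ j, algebraMap A B (g j) = 0 := by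
    intro j
    rw [hgdef]
    simp only
    rw [map_sum, Finset.sum_congr rfl fun i _ => by rw [map_mul, haB]]
    rw [← hb2 j]
    exact Finset.sum_congr rfl fun i _ => by rw [smul_eq_mul]; ring
  set p' : Fin nι → M := fun i => m i - ∑ j, aB i j • Y j with hp'def
  have hp'B : ∀ i, πB (p' i) = 0 := by
    intro i
    rw [hp'def]
    simp only
    rw [map_sub, map_sum, hb1 i]
    rw [Finset.sum_congr rfl fun j _ => show πB (aB i j • Y j) = b i j • x j by
      rw [πB_smul (B := B) πB, haB, hY]]
    exact sub_self _
  have hp'C : ∀ i, (1 : K) ⊗ₜ[C] πC (p' i) = 0 := by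
    intro i
    have h5 := hcompat (p' i)
    rw [hp'B i] at h5
    simpa using h5.symm
  -- representation of p' over lifted J-coefficients
  choose kJ jJ zJ hjJ hdJ using fun i => kerClC_rep MC hsurj (πC (p' i)) (hp'C i)
  choose kD cD XD vD hvD hDCrep using fun (p : Σ i : Fin nι, Fin (kJ i)) =>
    DC θ πB πC hsurj hcompat hfib (zJ p.1 p.2)
  choose Λ hΛB hΛC using fun (p : Σ i : Fin nι, Fin (kJ i)) (r : Fin (kD p)) =>
    AliftJ hpull (jJ p.1 p.2 * cD p r) (by rw [map_mul, hjJ, zero_mul])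
  choose Λ' hΛ'B hΛ'C using fun (p : Σ i : Fin nι, Fin (kJ i)) =>
    AliftJ hpull (jJ p.1 p.2) (hjJ p.1 p.2)
  choose VV hVVB hVVC using fun (p : Σ i : Fin nι, Fin (kJ i)) =>
    MmkJ θ πB πC hfib (vD p) (hvD p)
  -- the combined family
  set EE := (Fin nκ ⊕ ((Σ p : (Σ i : Fin nι, Fin (kJ i)), Fin (kD p)) ⊕
    (Σ i : Fin nι, Fin (kJ i)))) with hEE
  set αm : Fin nι → EE → A := fun i => Sum.elim (fun j => aB i j)
    (Sum.elim (fun q => if i = q.1.1 then Λ q.1 q.2 else 0)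
      (fun p => if i = p.1 then Λ' p else 0)) with hαm
  set zz : EE → M := Sum.elim (fun j => Y j)
    (Sum.elim (fun q => XD q.1 q.2) (fun p => VV p)) with hzz
  have hp'expr : ∀ i, p' i = ∑ q : (Σ p : (Σ i : Fin nι, Fin (kJ i)), Fin (kD p)),
      (if i = q.1.1 then Λ q.1 q.2 else 0) • XD q.1 q.2
      + ∑ p : (Σ i : Fin nι, Fin (kJ i)), (if i = p.1 then Λ' p else 0) • VV p := by
    intro i
    apply Minj θ πB πC hcompat hfib
    · rw [hp'B i, map_add, map_sum, map_sum]
      rw [Finset.sum_congr rfl fun q _ => show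
          πB ((if i = q.1.1 then Λ q.1 q.2 else 0) • XD q.1 q.2) = 0 by
        rw [πB_smul (B := B) πB]
        split
        · rw [hΛB, zero_smul]
        · rw [map_zero, zero_smul]]
      rw [Finset.sum_congr rfl fun p _ => show
          πB ((if i = p.1 then Λ' p else 0) • VV p) = 0 by
        rw [πB_smul (B := B) πB]
        split
        · rw [hΛ'B, zero_smul]
        · rw [map_zero, zero_smul]]
      simp
    · rw [map_add, map_sum, map_sum]
      rw [Finset.sum_congr rfl fun q _ => show
          πC ((if i = q.1.1 then Λ q.1 q.2 else 0) • XD q.1 q.2)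
            = (if i = q.1.1 then (jJ q.1.1 q.1.2 * cD q.1 q.2) else 0) • πC (XD q.1 q.2) by
        rw [πC_smul (C := C) πC]
        split
        · rw [hΛC]
        · rw [map_zero]]
      rw [Finset.sum_congr rfl fun p _ => show
          πC ((if i = p.1 then Λ' p else 0) • VV p)
            = (if i = p.1 then jJ p.1 p.2 else 0) • vD p by
        rw [πC_smul (C := C) πC]
        split
        · rw [hΛ'C, hVVC]
        · rw [map_zero, zero_smul, zero_smul]]
      rw [sum_sigma_univ fun q : (Σ p : (Σ i : Fin nι, Fin (kJ i)), Fin (kD p)) =>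
        (if i = q.1.1 then (jJ q.1.1 q.1.2 * cD q.1 q.2) else 0) • πC (XD q.1 q.2)]
      rw [sum_sigma_univ fun p : (Σ i : Fin nι, Fin (kJ i)) =>
        (if i = p.1 then jJ p.1 p.2 else 0) • vD p]
      rw [sum_sigma_univ fun p : (Σ i : Fin nι, Fin (kJ i)) => (∑ r : Fin (kD p),
        (if i = p.1 then (jJ p.1 p.2 * cD p r) else 0) • πC (XD p r))]
      rw [Finset.sum_eq_single i (fun i' _ hne => by
          rw [Finset.sum_congr rfl fun u _ => show (∑ r : Fin (kD ⟨i', u⟩),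
            (if i = i' then (jJ i' u * cD ⟨i', u⟩ r) else 0) • πC (XD ⟨i', u⟩ r)) = 0 by
            rw [Finset.sum_congr rfl fun r _ => by
              rw [if_neg (Ne.symm hne), zero_smul]]
            exact Finset.sum_const_zero]
          exact Finset.sum_const_zero)
        (fun hmem => absurd (Finset.mem_univ i) hmem)]
      rw [Finset.sum_eq_single i (fun i' _ hne => by
          rw [Finset.sum_congr rfl fun u _ => by rw [if_neg (Ne.symm hne), zero_smul]]
          exact Finset.sum_const_zero)
        (fun hmem => absurd (Finset.mem_univ i) hmem)]
      rw [hdJ i, ← Finset.sum_add_distrib]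
      refine Finset.sum_congr rfl fun u _ => ?_
      rw [hDCrep ⟨i, u⟩, smul_add, Finset.smul_sum, if_pos rfl]
      congr 1
      · exact Finset.sum_congr rfl fun r _ => by rw [if_pos rfl, smul_smul]
  have hexpr : ∀ i, m i = ∑ e, αm i e • zz e := by
    intro i
    rw [hαm, hzz]
    rw [Fintype.sum_sum_type]
    simp only [Sum.elim_inl, Sum.elim_inr]
    rw [Fintype.sum_sum_type]
    simp only [Sum.elim_inl, Sum.elim_inr]
    rw [← hp'expr i, hp'def]
    simp only
    abel
  -- the induced relation and its coefficients
  set hh : EE → A := fun e => ∑ i, f i * αm i e with hhh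
  have hhB : ∀ e, algebraMap A B (hh e) = 0 := by
    intro e
    rw [hhh]
    simp only
    cases e with
    | inl j =>
      simp only [hαm, Sum.elim_inl]
      exact hgB j
    | inr e' =>
      rw [map_sum]
      cases e' with
      | inl q =>
        rw [Finset.sum_congr rfl fun i _ => show
            algebraMap A B (f i * αm i (Sum.inr (Sum.inl q))) = 0 by
          rw [hαm]
          simp only [Sum.elim_inr, Sum.elim_inl]
          rw [map_mul]
          split
          · rw [hΛB, mul_zero]
          · rw [map_zero, mul_zero]]
        exact Finset.sum_const_zero
      | inr p =>
        rw [Finset.sum_congr rfl fun i _ => show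
            algebraMap A B (f i * αm i (Sum.inr (Sum.inr p))) = 0 by
          rw [hαm]
          simp only [Sum.elim_inr, Sum.elim_inl]
          rw [map_mul]
          split
          · rw [hΛ'B, mul_zero]
          · rw [map_zero, mul_zero]]
        exact Finset.sum_const_zero
  have hhrel : ∑ e, hh e • zz e = 0 := by
    rw [hhh]
    simp only
    rw [Finset.sum_congr rfl fun e _ => show (∑ i, f i * αm i e) • zz e
      = ∑ i, (f i * αm i e) • zz e from Finset.sum_smul]
    rw [Finset.sum_comm]
    rw [← hrel]
    refine Finset.sum_congr rfl fun i _ => ?_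
    rw [hexpr i, Finset.smul_sum]
    exact Finset.sum_congr rfl fun e _ => mul_smul (f i) (αm i e) (zz e)
  obtain ⟨τ, instτ, aZ, zZ, hZ1, hZ2⟩ := glued_triv_J θ πB πC hsurj hpull hcompat hfib
    hh hhB zz hhrel
  refine ⟨τ, instτ, fun i t => ∑ e, αm i e * aZ e t, zZ, ?_, ?_⟩
  · intro i
    rw [hexpr i]
    rw [Finset.sum_congr rfl fun e _ => by rw [hZ1 e, Finset.smul_sum]]
    rw [Finset.sum_comm]
    refine Finset.sum_congr rfl fun t _ => ?_
    rw [Finset.sum_smul]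
    exact Finset.sum_congr rfl fun e _ => smul_smul (αm i e) (aZ e t) (zZ t)
  · intro t
    have h7 := hZ2 t
    calc ∑ i, f i * ∑ e, αm i e * aZ e t
        = ∑ i, ∑ e, f i * (αm i e * aZ e t) :=
          Finset.sum_congr rfl fun i _ => Finset.mul_sum _ _ _
      _ = ∑ e, ∑ i, f i * (αm i e * aZ e t) := Finset.sum_comm
      _ = ∑ e, hh e * aZ e t := by
          refine Finset.sum_congr rfl fun e _ => ?_
          rw [hhh]
          simp only
          rw [Finset.sum_mul]
          exact Finset.sum_congr rfl fun i _ => by ring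
      _ = 0 := h7
end Milnor5

/-- Ferrand's gluing theorem: given flat modules `M_B` over `B` and `M_C` over
`C` together with an isomorphism `θ : K ⊗_B M_B ≅ K ⊗_C M_C` of `K`-modules,
the fiber product `M = M_B ×_{K ⊗_C M_C} M_C` (encoded here by its pullback
universal property via `πB`, `πC`) is a flat `A`-module. -/
theorem ferrand_glued_module_flat
    (A B C K : Type*) [CommRing A] [CommRing B] [CommRing C] [CommRing K]
    [Algebra A B] [Algebra A C] [Algebra A K] [Algebra B K] [Algebra C K]
    [IsScalarTower A B K] [IsScalarTower A C K]
    (hsurj : Function.Surjective (algebraMap C K))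
    (hpull : ∀ (b : B) (c : C), algebraMap B K b = algebraMap C K c →
      ∃! a : A, algebraMap A B a = b ∧ algebraMap A C a = c)
    (MB MC : Type*)
    [AddCommGroup MB] [Module B MB] [Module A MB] [IsScalarTower A B MB]
    [AddCommGroup MC] [Module C MC] [Module A MC] [IsScalarTower A C MC]
    [Module.Flat B MB] [Module.Flat C MC]
    (θ : (K ⊗[B] MB) ≃ₗ[K] (K ⊗[C] MC))
    (M : Type*) [AddCommGroup M] [Module A M]
    (πB : M →ₗ[A] MB) (πC : M →ₗ[A] MC)
    (hcompat : ∀ m : M, θ ((1 : K) ⊗ₜ[B] πB m) = (1 : K) ⊗ₜ[C] πC m)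
    (hfib : ∀ (x : MB) (y : MC), θ ((1 : K) ⊗ₜ[B] x) = (1 : K) ⊗ₜ[C] y →
      ∃! m : M, πB m = x ∧ πC m = y) :
    Module.Flat A M := by
  classical
  rw [Module.Flat.iff_rTensor_injective' (R := A) (M := M)]
  intro I
  rw [injective_iff_map_eq_zero]
  intro x hx
  obtain ⟨n0, fI, m, rfl⟩ := exists_fin_rep (R := A) x
  have h1 : LinearMap.rTensor M I.subtype (∑ i, fI i ⊗ₜ[A] m i)
      = ∑ i, (fI i : A) ⊗ₜ[A] m i := by
    rw [map_sum]
    exact Finset.sum_congr rfl fun i _ => by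
      rw [LinearMap.rTensor_tmul, Submodule.coe_subtype]
  rw [h1] at hx
  have hrel : ∑ i, (fI i : A) • m i = 0 := by
    have h2 := congrArg (TensorProduct.lid A M) hx
    rw [map_sum, map_zero] at h2
    rw [← h2]
    exact Finset.sum_congr rfl fun i _ => (TensorProduct.lid_tmul (m i) ((fI i : A))).symm
  obtain ⟨τ, instτ, a, z, hz1, hz2⟩ := glued_triv θ πB πC hsurj hpull hcompat hfib
    (fun i => (fI i : A)) m hrel
  have hcoeff : ∀ t, (∑ i, a i t • fI i : ↥I) = 0 := by
    intro t
    apply Subtype.ext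
    have hval : ((∑ i, a i t • fI i : ↥I) : A) = ∑ i, a i t * (fI i : A) := by
      simp
    rw [hval]
    have h3 := hz2 t
    rw [show ((0 : ↥I) : A) = 0 from rfl, ← h3]
    exact Finset.sum_congr rfl fun i _ => by ring
  have h4 : ∑ i, fI i ⊗ₜ[A] m i = ∑ t, (∑ i, a i t • fI i) ⊗ₜ[A] z t := by
    rw [Finset.sum_congr rfl fun i _ => show fI i ⊗ₜ[A] m i
        = ∑ t, (a i t • fI i) ⊗ₜ[A] z t by
      rw [hz1 i, TensorProduct.tmul_sum]
      exact Finset.sum_congr rfl fun t _ => (smul_tmul (a i t) (fI i) (z t)).symm]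
    rw [Finset.sum_comm]
    exact Finset.sum_congr rfl fun t _ => (TensorProduct.sum_tmul _ _ _).symm
  rw [h4]
  rw [Finset.sum_congr rfl fun t _ => show (∑ i, a i t • fI i) ⊗ₜ[A] z t = 0 by
    rw [hcoeff t, TensorProduct.zero_tmul]]
  exact Finset.sum_const_zero
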